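/- For fixed β > 0, the function F^R(L) = √(β/2) · (1 − e^{−L√(2β)}) / sinh(L√(2β)) satisfies F^R(L) · e^{L√(2β)} → √(2β) as L → ∞; in particular F^R(L) ≈ e^{−L√(2β)}, meaning the ratio F^R(L)/e^{−L√(2β)} converges to a positive constant. -/

import Mathlib

open Real Filter

theorem casimir_force_reflecting_asymp (β : ℝ) (hβ : 0 < β) :
    Tendsto (fun L : ℝ =>
        (Real.sqrt (β/2) * (1 - Real.exp (-(L * Real.sqrt (2*β)))) / Real.sinh (L * Real.sqrt (2*β)))
          * Real.exp (L * Real.sqrt (2*β)))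
      atTop (nhds (Real.sqrt (2*β))) ∧
    ∃ C : ℝ, 0 < C ∧
      Tendsto (fun L : ℝ =>
          (Real.sqrt (β/2) * (1 - Real.exp (-(L * Real.sqrt (2*β)))) / Real.sinh (L * Real.sqrt (2*β)))
            / Real.exp (-(L * Real.sqrt (2*β))))
        atTop (nhds C) := by
  set c := Real.sqrt (2*β) with hc
  have hcpos : 0 < c := Real.sqrt_pos.mpr (by linarith)
  have hsq : Real.sqrt (2*β) = 2 * Real.sqrt (β/2) := by
    rw [show (2:ℝ)*β = 4 * (β/2) by ring, show (4:ℝ) = 2^2 by norm_num,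
      Real.sqrt_mul (by positivity), Real.sqrt_sq (by norm_num)]
  -- key identity for L > 0
  have key : ∀ L : ℝ, 0 < L →
      (Real.sqrt (β/2) * (1 - Real.exp (-(L * c))) / Real.sinh (L * c)) * Real.exp (L * c)
        = c / (1 + Real.exp (-(L * c))) := by
    intro L hL
    have hx : 0 < L * c := mul_pos hL hcpos
    have hsinh : Real.sinh (L * c) ≠ 0 := ne_of_gt (Real.sinh_pos_iff.mpr hx)
    have h1 : (0:ℝ) < 1 + Real.exp (-(L * c)) := by positivity
    have h2 : Real.sinh (L*c) = (Real.exp (L*c) - Real.exp (-(L*c)))/2 := Real.sinh_eq _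
    set u := Real.exp (-(L*c)) with hu
    set E := Real.exp (L*c) with hE
    have hEu : E * u = 1 := by rw [hE, hu, ← Real.exp_add]; simp
    have h1' : (1:ℝ) + u ≠ 0 := ne_of_gt h1
    have hEmu : E - u ≠ 0 := by
      intro h; apply hsinh; rw [h2, h]; ring
    rw [h2, hc, hsq]
    field_simp
    linear_combination (-u) * hEu
  -- limit of exp(-(L*c)) is 0
  have hlim : Tendsto (fun L : ℝ => Real.exp (-(L * c))) atTop (nhds 0) := by
    apply Real.tendsto_exp_atBot.comp
    exact (tendsto_atBot_mono (fun L => le_refl _)) (tendsto_neg_atBot_iff.mpr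
      (Tendsto.atTop_mul_const hcpos tendsto_id))
  have hmain : Tendsto (fun L : ℝ =>
      (Real.sqrt (β/2) * (1 - Real.exp (-(L * c))) / Real.sinh (L * c)) * Real.exp (L * c))
      atTop (nhds c) := by
    have h2 : Tendsto (fun L : ℝ => c / (1 + Real.exp (-(L * c)))) atTop (nhds c) := by
      have := (tendsto_const_nhds (x := c) (f := atTop (α := ℝ))).div
        ((tendsto_const_nhds (x := (1:ℝ))).add hlim) (by norm_num)
      rw [add_zero, div_one] at this; exact this
    refine h2.congr' ?_
    filter_upwards [eventually_gt_atTop 0] with L hL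
    exact (key L hL).symm
  constructor
  · exact hmain
  · refine ⟨c, hcpos, ?_⟩
    refine hmain.congr' ?_
    filter_upwards with L
    simp [Real.exp_neg, div_eq_mul_inv]
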